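/- Consider a generations network with generation size K ≥ 2 associated to symmetric observation sets with parameters (d, c) where d ≥ 2, and let W_i and β_i be given by the equilibrium weight recursion. Then for every generation t: (i) the quantity Σ_j W_i(j)² is the same for all agents i in generation t; (ii) the quantity Σ_j W_i(j)·W_{i′}(j) is the same for all pairs of distinct agents i ≠ i′ in generation t; and (iii) for t ≥ 2, all d components of the weight vector β_i are equal to one another, and their common value is the same for all agents i in generation t (denote it β_t). -/

import Mathlib

open Matrix Finset Filter

/-- The equilibrium weight vectors of the sequential social-learning model. -/
noncomputable def eqW (Net : ℕ → Finset ℕ) (i : ℕ) : ℕ → ℝ :=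
  Nat.strongRecOn i (fun n prev =>
    let nb := (Net n).filter (fun j => j < n)
    if nb.Nonempty then
      let What : Matrix {j // j ∈ nb} (Fin (n - 1)) ℝ :=
        Matrix.of (fun j m => prev j.1 (Finset.mem_filter.mp j.2).2 (m.1 + 1))
      let beta : {j // j ∈ nb} → ℝ :=
        Matrix.vecMul (fun j => ∑ m, What j m) ((What * What.transpose)⁻¹)
      fun m => (if m = n then (1 : ℝ) else 0) +
        ∑ j : {j // j ∈ nb}, beta j * prev j.1 (Finset.mem_filter.mp j.2).2 m
    else fun m => if m = n then (1 : ℝ) else 0)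

/-- The number of signals aggregated by agent `i`: `r_i = Σ_j W_i(j)`. -/
noncomputable def rcount (Net : ℕ → Finset ℕ) (i : ℕ) : ℝ :=
  ∑ j ∈ Finset.range (i + 1), eqW Net i j

/-- The generations network with generation size `K` and observation sets `Ψ`:
`N(i) = ∅` for `1 ≤ i ≤ K`, and `N((t−1)K+k) = {(t−2)K+ψ : ψ ∈ Ψ_k}` for `t ≥ 2`,
`1 ≤ k ≤ K`. -/
def genNet (K : ℕ) (Ψ : ℕ → Finset ℕ) : ℕ → Finset ℕ := fun i =>
  if i ≤ K then ∅
  else (Ψ ((i - 1) % K + 1)).image (fun ψ => ((i - 1) / K - 1) * K + ψ)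

/-- The (filtered) neighborhood used in the equilibrium weight recursion. -/
def nbr (Net : ℕ → Finset ℕ) (i : ℕ) : Finset ℕ := (Net i).filter (fun j => j < i)

/-- The matrix `Ŵ` of agent `i`'s neighbors' weight vectors restricted to
coordinates `1,…,i−1`. -/
noncomputable def hatW (Net : ℕ → Finset ℕ) (i : ℕ) :
    Matrix {j // j ∈ nbr Net i} (Fin (i - 1)) ℝ :=
  Matrix.of (fun j m => eqW Net j.1 (m.1 + 1))

/-- The equilibrium weight vector `β_i = 𝟙ᵀ Ŵᵀ (ŴŴᵀ)⁻¹` of agent `i` on her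
neighbors' log-actions. -/
noncomputable def eqBeta (Net : ℕ → Finset ℕ) (i : ℕ) : {j // j ∈ nbr Net i} → ℝ :=
  Matrix.vecMul (fun j => ∑ m, hatW Net i j m)
    ((hatW Net i * (hatW Net i).transpose)⁻¹)

lemma eqW_eq (Net : ℕ → Finset ℕ) (i : ℕ) :
    eqW Net i = if (nbr Net i).Nonempty then
      (fun m => (if m = i then (1:ℝ) else 0) +
        ∑ j : {j // j ∈ nbr Net i}, eqBeta Net i j * eqW Net j.1 m)
    else fun m => if m = i then 1 else 0 := by
  rw [eqW, Nat.strongRecOn_eq]; rfl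

lemma eqW_empty (Net : ℕ → Finset ℕ) (i : ℕ) (h : nbr Net i = ∅) (m : ℕ) :
    eqW Net i m = if m = i then 1 else 0 := by
  rw [eqW_eq, if_neg (by simp [h])]

lemma eqW_rec (Net : ℕ → Finset ℕ) (i : ℕ) (h : (nbr Net i).Nonempty) (m : ℕ) :
    eqW Net i m = (if m = i then (1:ℝ) else 0) +
      ∑ j : {j // j ∈ nbr Net i}, eqBeta Net i j * eqW Net j.1 m := by
  rw [eqW_eq, if_pos h]

lemma sum_fin_shift (n : ℕ) (F : ℕ → ℝ) (h0 : F 0 = 0) :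
    ∑ m : Fin n, F (m.1 + 1) = ∑ m ∈ Finset.range (n + 1), F m := by
  rw [Fin.sum_univ_eq_sum_range (fun m => F (m + 1)) n, Finset.sum_range_succ']
  simp [h0]

lemma sum_range_reduce (n N : ℕ) (hN : N ≤ n) (F : ℕ → ℝ)
    (hv : ∀ m, N < m → F m = 0) :
    ∑ m ∈ Finset.range (n + 1), F m = ∑ m ∈ Finset.range (N + 1), F m := by
  refine (Finset.sum_subset (Finset.range_subset_range.2 (by omega)) ?_).symm
  intro m hm hm'
  exact hv m (by simp at hm hm' ⊢; omega)

lemma invJ {ι : Type} [Fintype ι] [DecidableEq ι] (α γ : ℝ) (h1 : α - γ ≠ 0)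
    (h2 : α + ((Fintype.card ι : ℝ) - 1) * γ ≠ 0) :
    (Matrix.of (fun i j : ι => if i = j then α else γ))⁻¹
      = Matrix.of (fun i j : ι => (if i = j then (α - γ)⁻¹ else 0)
          + (-γ * ((α - γ) * (α + ((Fintype.card ι : ℝ) - 1) * γ))⁻¹)) := by
  apply Matrix.inv_eq_right_inv
  ext i j
  set a := (α - γ)⁻¹ with ha
  set b := -γ * ((α - γ) * (α + ((Fintype.card ι : ℝ) - 1) * γ))⁻¹ with hb
  simp only [Matrix.mul_apply, Matrix.of_apply, Matrix.one_apply, mul_add]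
  rw [Finset.sum_add_distrib]
  have e1 : ∑ l : ι, (if i = l then α else γ) * (if l = j then a else 0)
      = (if i = j then α else γ) * a := by
    rw [Finset.sum_eq_single j]
    · simp
    · intro b' _ hb'; simp [hb']
    · simp
  have e2 : ∑ l : ι, (if i = l then α else γ) * b
      = (α + ((Fintype.card ι : ℝ) - 1) * γ) * b := by
    rw [← Finset.sum_mul]
    congr 1
    have : ∑ l : ι, (if i = l then α else γ)
        = ∑ l : ι, (γ + if i = l then α - γ else 0) := by
      apply Finset.sum_congr rfl; intro l _; split <;> ring
    rw [this, Finset.sum_add_distrib, Finset.sum_const, Finset.sum_ite_eq]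
    simp; ring
  rw [e1, e2, ha, hb]
  split
  · rw [mul_inv]; linear_combination (-γ * (α - γ)⁻¹) * mul_inv_cancel₀ h2 + mul_inv_cancel₀ h1
  · rw [mul_inv]; linear_combination (-γ * (α - γ)⁻¹) * mul_inv_cancel₀ h2
lemma nbr_base (K : ℕ) (Ψ : ℕ → Finset ℕ) (i : ℕ) (hi : i ≤ K) :
    nbr (genNet K Ψ) i = ∅ := by
  simp [nbr, genNet, hi]

lemma nbr_gen (K : ℕ) (Ψ : ℕ → Finset ℕ) (hsub : ∀ k ∈ Finset.Icc 1 K, Ψ k ⊆ Finset.Icc 1 K)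
    (q k : ℕ) (hk1 : 1 ≤ k) (hk2 : k ≤ K) :
    nbr (genNet K Ψ) ((q + 1) * K + k) = (Ψ k).image (fun ψ => q * K + ψ) := by
  have hK : 1 ≤ K := le_trans hk1 hk2
  have hgt : ¬((q + 1) * K + k ≤ K) := by nlinarith
  have h1 : (q + 1) * K + k - 1 = (q + 1) * K + (k - 1) := by omega
  have h2 : ((q + 1) * K + (k - 1)) % K = k - 1 := by
    rw [add_comm, Nat.add_mul_mod_self_right]
    exact Nat.mod_eq_of_lt (by omega)
  have h3 : ((q + 1) * K + (k - 1)) / K = q + 1 := by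
    rw [add_comm, Nat.add_mul_div_right _ _ (by omega : 0 < K), Nat.div_eq_of_lt (by omega)]
    omega
  unfold nbr genNet
  rw [if_neg hgt, h1, h2, h3]
  have hk' : k - 1 + 1 = k := by omega
  rw [hk']
  have h4 : (q + 1 - 1) = q := by omega
  rw [h4]
  apply Finset.filter_true_of_mem
  intro x hx
  obtain ⟨ψ, hψ, rfl⟩ := Finset.mem_image.mp hx
  have := hsub k (Finset.mem_Icc.mpr ⟨hk1, hk2⟩) hψ
  simp only [Finset.mem_Icc] at this
  nlinarith
/-- Invariant for generation `q+1` (agents `q*K+ψ`, `ψ ∈ [1,K]`). -/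
def GInv (K : ℕ) (Ψ : ℕ → Finset ℕ) (q : ℕ) (V C r : ℝ) : Prop :=
  (∀ ψ ∈ Finset.Icc 1 K, ∀ m, eqW (genNet K Ψ) (q * K + ψ) m ≠ 0 →
      (m ≠ 0 ∧ m ≤ q * K) ∨ m = q * K + ψ) ∧
  (∀ ψ ∈ Finset.Icc 1 K, ∑ m ∈ Finset.range ((q + 1) * K + 1),
      eqW (genNet K Ψ) (q * K + ψ) m * eqW (genNet K Ψ) (q * K + ψ) m = V) ∧
  (∀ ψ₁ ∈ Finset.Icc 1 K, ∀ ψ₂ ∈ Finset.Icc 1 K, ψ₁ ≠ ψ₂ →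
      ∑ m ∈ Finset.range ((q + 1) * K + 1),
      eqW (genNet K Ψ) (q * K + ψ₁) m * eqW (genNet K Ψ) (q * K + ψ₂) m = C) ∧
  (∀ ψ ∈ Finset.Icc 1 K, ∑ m ∈ Finset.range ((q + 1) * K + 1),
      eqW (genNet K Ψ) (q * K + ψ) m = r)

lemma GInv.Whigh {K : ℕ} {Ψ : ℕ → Finset ℕ} {q : ℕ} {V C r : ℝ}
    (h : GInv K Ψ q V C r) {ψ : ℕ} (hψ : ψ ∈ Finset.Icc 1 K) {m : ℕ}
    (hm : m = 0 ∨ (q + 1) * K < m) : eqW (genNet K Ψ) (q * K + ψ) m = 0 := by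
  by_contra hne
  rcases h.1 ψ hψ m hne with ⟨h0, hle⟩ | heq
  · rcases hm with rfl | hm
    · exact h0 rfl
    · have : (q + 1) * K = q * K + K := by ring
      omega
  · simp only [Finset.mem_Icc] at hψ
    have : (q + 1) * K = q * K + K := by ring
    omega

lemma GInv.inner {K : ℕ} {Ψ : ℕ → Finset ℕ} {q : ℕ} {V C r : ℝ}
    (h : GInv K Ψ q V C r) {ψ₁ ψ₂ : ℕ} (h₁ : ψ₁ ∈ Finset.Icc 1 K)
    (h₂ : ψ₂ ∈ Finset.Icc 1 K) {n : ℕ} (hn : (q + 1) * K ≤ n) :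
    ∑ m ∈ Finset.range (n + 1),
      eqW (genNet K Ψ) (q * K + ψ₁) m * eqW (genNet K Ψ) (q * K + ψ₂) m
      = if ψ₁ = ψ₂ then V else C := by
  rw [sum_range_reduce n ((q + 1) * K) hn _
    (fun m hm => by rw [h.Whigh h₁ (Or.inr hm), zero_mul])]
  by_cases hx : ψ₁ = ψ₂
  · subst hx; rw [if_pos rfl]; exact h.2.1 ψ₁ h₁
  · rw [if_neg hx]; exact h.2.2.1 ψ₁ h₁ ψ₂ h₂ hx

lemma GInv.rsum {K : ℕ} {Ψ : ℕ → Finset ℕ} {q : ℕ} {V C r : ℝ}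
    (h : GInv K Ψ q V C r) {ψ : ℕ} (hψ : ψ ∈ Finset.Icc 1 K) {n : ℕ}
    (hn : (q + 1) * K ≤ n) :
    ∑ m ∈ Finset.range (n + 1), eqW (genNet K Ψ) (q * K + ψ) m = r := by
  rw [sum_range_reduce n ((q + 1) * K) hn _
    (fun m hm => h.Whigh hψ (Or.inr hm))]
  exact h.2.2.2 ψ hψ
lemma step_beta {K d : ℕ} {Ψ : ℕ → Finset ℕ} {q : ℕ} {V C r : ℝ}
    (hd : 2 ≤ d)
    (hsub : ∀ k ∈ Finset.Icc 1 K, Ψ k ⊆ Finset.Icc 1 K)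
    (hcard : ∀ k ∈ Finset.Icc 1 K, (Ψ k).card = d)
    (h : GInv K Ψ q V C r) (h1 : 1 ≤ V - C) (h2 : 0 ≤ C) :
    ∀ k ∈ Finset.Icc 1 K, ∀ x, eqBeta (genNet K Ψ) ((q + 1) * K + k) x
      = r * ((V - C)⁻¹ + (d : ℝ) * (-C * ((V - C) * (V + ((d : ℝ) - 1) * C))⁻¹)) := by
  intro k hk x
  obtain ⟨hk1, hk2⟩ := Finset.mem_Icc.mp hk
  have hnbr : nbr (genNet K Ψ) ((q + 1) * K + k) = (Ψ k).image (fun ψ => q * K + ψ) :=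
    nbr_gen K Ψ hsub q k hk1 hk2
  have hmem : ∀ j : ↥(nbr (genNet K Ψ) ((q + 1) * K + k)),
      ∃ ψ, ψ ∈ Finset.Icc 1 K ∧ j.1 = q * K + ψ := by
    intro j
    have hj2 : j.1 ∈ (Ψ k).image (fun ψ => q * K + ψ) := by rw [← hnbr]; exact j.2
    obtain ⟨ψ, hψ, hj⟩ := Finset.mem_image.mp hj2
    exact ⟨ψ, hsub k hk hψ, hj.symm⟩
  have hW0 : ∀ ψ ∈ Finset.Icc 1 K, eqW (genNet K Ψ) (q * K + ψ) 0 = 0 :=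
    fun ψ hψ => h.Whigh hψ (Or.inl rfl)
  have hile : (q + 1) * K ≤ (q + 1) * K + k - 1 := by omega
  have hcardι : Fintype.card ↥(nbr (genNet K Ψ) ((q + 1) * K + k)) = d := by
    rw [Fintype.card_coe, hnbr,
      Finset.card_image_of_injective _ (add_right_injective (q * K)), hcard k hk]
  have hprod : hatW (genNet K Ψ) ((q + 1) * K + k)
        * (hatW (genNet K Ψ) ((q + 1) * K + k)).transpose
      = Matrix.of (fun j j' : ↥(nbr (genNet K Ψ) ((q + 1) * K + k)) =>
          if j = j' then V else C) := by
    ext j j'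
    obtain ⟨ψ, hψI, hj⟩ := hmem j
    obtain ⟨ψ', hψI', hj'⟩ := hmem j'
    simp only [Matrix.mul_apply, Matrix.transpose_apply, hatW, Matrix.of_apply]
    rw [hj, hj']
    rw [sum_fin_shift ((q + 1) * K + k - 1)
      (fun m => eqW (genNet K Ψ) (q * K + ψ) m * eqW (genNet K Ψ) (q * K + ψ') m)
      (by simp [hW0 ψ hψI])]
    rw [h.inner hψI hψI' hile]
    congr 1
    simp only [eq_iff_iff]
    constructor
    · rintro rfl; exact Subtype.ext (by rw [hj, hj'])
    · intro hjj; have := congrArg Subtype.val hjj; rw [hj, hj'] at this; omega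
  have hv : (fun j : ↥(nbr (genNet K Ψ) ((q + 1) * K + k)) =>
      ∑ m, hatW (genNet K Ψ) ((q + 1) * K + k) j m) = fun _ => r := by
    funext j
    obtain ⟨ψ, hψI, hj⟩ := hmem j
    simp only [hatW, Matrix.of_apply]
    rw [hj, sum_fin_shift ((q + 1) * K + k - 1)
      (fun m => eqW (genNet K Ψ) (q * K + ψ) m) (hW0 ψ hψI)]
    exact h.rsum hψI hile
  have hVC : V - C ≠ 0 := by linarith
  have hdR : (1 : ℝ) ≤ (d : ℝ) := by exact_mod_cast Nat.one_le_of_lt hd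
  have hVd : V + ((Fintype.card ↥(nbr (genNet K Ψ) ((q + 1) * K + k)) : ℝ) - 1)
      * C ≠ 0 := by rw [hcardι]; nlinarith
  rw [eqBeta, hv, hprod, invJ V C hVC hVd]
  simp only [hcardι]
  set b := -C * ((V - C) * (V + ((d : ℝ) - 1) * C))⁻¹ with hb
  simp only [Matrix.vecMul, dotProduct, Matrix.of_apply, mul_add]
  rw [Finset.sum_add_distrib, Finset.sum_const]
  have e1 : ∑ l : ↥(nbr (genNet K Ψ) ((q + 1) * K + k)),
      r * (if l = x then (V - C)⁻¹ else 0) = r * (V - C)⁻¹ := by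
    rw [Finset.sum_eq_single x] <;> simp (config := {contextual := true})
  rw [e1, Finset.card_univ, hcardι]
  simp only [nsmul_eq_mul]
  ring
lemma step_rec {K d : ℕ} {Ψ : ℕ → Finset ℕ} {q : ℕ} {V C r : ℝ}
    (hd : 2 ≤ d)
    (hsub : ∀ k ∈ Finset.Icc 1 K, Ψ k ⊆ Finset.Icc 1 K)
    (hcard : ∀ k ∈ Finset.Icc 1 K, (Ψ k).card = d)
    (h : GInv K Ψ q V C r) (h1 : 1 ≤ V - C) (h2 : 0 ≤ C) :
    ∀ k ∈ Finset.Icc 1 K, ∀ m, eqW (genNet K Ψ) ((q + 1) * K + k) m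
      = (if m = (q + 1) * K + k then 1 else 0)
        + (r * ((V - C)⁻¹ + (d : ℝ) * (-C * ((V - C) * (V + ((d : ℝ) - 1) * C))⁻¹)))
          * ∑ ψ ∈ Ψ k, eqW (genNet K Ψ) (q * K + ψ) m := by
  intro k hk m
  obtain ⟨hk1, hk2⟩ := Finset.mem_Icc.mp hk
  have hnbr : nbr (genNet K Ψ) ((q + 1) * K + k) = (Ψ k).image (fun ψ => q * K + ψ) :=
    nbr_gen K Ψ hsub q k hk1 hk2
  have hne : (nbr (genNet K Ψ) ((q + 1) * K + k)).Nonempty := by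
    rw [hnbr]
    apply Finset.Nonempty.image
    rw [← Finset.card_pos, hcard k hk]; omega
  rw [eqW_rec _ _ hne m]
  congr 1
  calc ∑ j : ↥(nbr (genNet K Ψ) ((q + 1) * K + k)),
        eqBeta (genNet K Ψ) ((q + 1) * K + k) j * eqW (genNet K Ψ) j.1 m
      = ∑ j : ↥(nbr (genNet K Ψ) ((q + 1) * K + k)),
        (r * ((V - C)⁻¹ + (d : ℝ) * (-C * ((V - C) * (V + ((d : ℝ) - 1) * C))⁻¹)))
          * eqW (genNet K Ψ) j.1 m := by
        apply Finset.sum_congr rfl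
        intro j _
        rw [step_beta hd hsub hcard h h1 h2 k hk j]
    _ = (r * ((V - C)⁻¹ + (d : ℝ) * (-C * ((V - C) * (V + ((d : ℝ) - 1) * C))⁻¹)))
          * ∑ j ∈ nbr (genNet K Ψ) ((q + 1) * K + k), eqW (genNet K Ψ) j m := by
        rw [← Finset.mul_sum]
        congr 1
        exact Finset.sum_coe_sort (nbr (genNet K Ψ) ((q + 1) * K + k))
          (fun j => eqW (genNet K Ψ) j m)
    _ = _ := by
        rw [hnbr, Finset.sum_image (fun a _ b _ hab => by omega)]
noncomputable def Bval (d : ℕ) (V C r : ℝ) : ℝ :=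
  r * ((V - C)⁻¹ + (d : ℝ) * (-C * ((V - C) * (V + ((d : ℝ) - 1) * C))⁻¹))

lemma step_key {K d : ℕ} {Ψ : ℕ → Finset ℕ} {q : ℕ} {V C r : ℝ}
    (hd : 2 ≤ d)
    (hsub : ∀ k ∈ Finset.Icc 1 K, Ψ k ⊆ Finset.Icc 1 K)
    (hcard : ∀ k ∈ Finset.Icc 1 K, (Ψ k).card = d)
    (h : GInv K Ψ q V C r) (h1 : 1 ≤ V - C) (h2 : 0 ≤ C) :
    ∀ k₁ ∈ Finset.Icc 1 K, ∀ k₂ ∈ Finset.Icc 1 K,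
      ∑ m ∈ Finset.range ((q + 1 + 1) * K + 1),
        eqW (genNet K Ψ) ((q + 1) * K + k₁) m * eqW (genNet K Ψ) ((q + 1) * K + k₂) m
      = (if k₁ = k₂ then (1 : ℝ) else 0)
        + (Bval d V C r) ^ 2
          * (((Ψ k₁ ∩ Ψ k₂).card : ℝ) * (V - C) + (d : ℝ) ^ 2 * C) := by
  intro k₁ hk₁ k₂ hk₂
  obtain ⟨hk₁1, hk₁2⟩ := Finset.mem_Icc.mp hk₁
  obtain ⟨hk₂1, hk₂2⟩ := Finset.mem_Icc.mp hk₂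
  have hrec := step_rec hd hsub hcard h h1 h2
  have hKq : (q + 1 + 1) * K = (q + 1) * K + K := by ring
  have expand : ∀ m ∈ Finset.range ((q + 1 + 1) * K + 1),
      eqW (genNet K Ψ) ((q + 1) * K + k₁) m * eqW (genNet K Ψ) ((q + 1) * K + k₂) m
      = ((if m = (q + 1) * K + k₁ then (1:ℝ) else 0) * (if m = (q + 1) * K + k₂ then 1 else 0))
        + ((Bval d V C r) * ((if m = (q + 1) * K + k₁ then 1 else 0)
            * ∑ ψ ∈ Ψ k₂, eqW (genNet K Ψ) (q * K + ψ) m)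
        + ((Bval d V C r) * ((if m = (q + 1) * K + k₂ then 1 else 0)
            * ∑ ψ ∈ Ψ k₁, eqW (genNet K Ψ) (q * K + ψ) m)
        + (Bval d V C r) ^ 2 * ((∑ ψ ∈ Ψ k₁, eqW (genNet K Ψ) (q * K + ψ) m)
            * ∑ ψ ∈ Ψ k₂, eqW (genNet K Ψ) (q * K + ψ) m))) := by
    intro m _
    rw [hrec k₁ hk₁ m, hrec k₂ hk₂ m, Bval]
    ring
  rw [Finset.sum_congr rfl expand, Finset.sum_add_distrib, Finset.sum_add_distrib,
    Finset.sum_add_distrib, ← Finset.mul_sum, ← Finset.mul_sum, ← Finset.mul_sum]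
  have S1 : ∑ m ∈ Finset.range ((q + 1 + 1) * K + 1),
      ((if m = (q + 1) * K + k₁ then (1:ℝ) else 0) * (if m = (q + 1) * K + k₂ then 1 else 0))
      = if k₁ = k₂ then 1 else 0 := by
    rw [Finset.sum_eq_single ((q + 1) * K + k₁)]
    · rw [if_pos rfl, one_mul]
      exact if_congr (by omega) rfl rfl
    · intro b _ hb; rw [if_neg hb, zero_mul]
    · intro hb; exact absurd (Finset.mem_range.mpr (by omega)) hb
  have S2 : ∑ m ∈ Finset.range ((q + 1 + 1) * K + 1),
      ((if m = (q + 1) * K + k₁ then (1:ℝ) else 0)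
        * ∑ ψ ∈ Ψ k₂, eqW (genNet K Ψ) (q * K + ψ) m) = 0 := by
    apply Finset.sum_eq_zero
    intro m _
    by_cases hmi : m = (q + 1) * K + k₁
    · subst hmi; rw [if_pos rfl, one_mul]
      apply Finset.sum_eq_zero
      intro ψ hψ
      exact h.Whigh (hsub k₂ hk₂ hψ) (Or.inr (by omega))
    · rw [if_neg hmi, zero_mul]
  have S3 : ∑ m ∈ Finset.range ((q + 1 + 1) * K + 1),
      ((if m = (q + 1) * K + k₂ then (1:ℝ) else 0)
        * ∑ ψ ∈ Ψ k₁, eqW (genNet K Ψ) (q * K + ψ) m) = 0 := by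
    apply Finset.sum_eq_zero
    intro m _
    by_cases hmi : m = (q + 1) * K + k₂
    · subst hmi; rw [if_pos rfl, one_mul]
      apply Finset.sum_eq_zero
      intro ψ hψ
      exact h.Whigh (hsub k₁ hk₁ hψ) (Or.inr (by omega))
    · rw [if_neg hmi, zero_mul]
  have S4 : ∑ m ∈ Finset.range ((q + 1 + 1) * K + 1),
      ((∑ ψ ∈ Ψ k₁, eqW (genNet K Ψ) (q * K + ψ) m)
        * ∑ ψ ∈ Ψ k₂, eqW (genNet K Ψ) (q * K + ψ) m)
      = (d : ℝ) * ((d : ℝ) * C) + ((Ψ k₁ ∩ Ψ k₂).card : ℝ) * (V - C) := by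
    calc ∑ m ∈ Finset.range ((q + 1 + 1) * K + 1),
          ((∑ ψ ∈ Ψ k₁, eqW (genNet K Ψ) (q * K + ψ) m)
            * ∑ ψ ∈ Ψ k₂, eqW (genNet K Ψ) (q * K + ψ) m)
        = ∑ m ∈ Finset.range ((q + 1 + 1) * K + 1), ∑ ψ ∈ Ψ k₁, ∑ ψ' ∈ Ψ k₂,
            eqW (genNet K Ψ) (q * K + ψ) m * eqW (genNet K Ψ) (q * K + ψ') m :=
          Finset.sum_congr rfl (fun m _ => Finset.sum_mul_sum _ _ _ _)
      _ = ∑ ψ ∈ Ψ k₁, ∑ m ∈ Finset.range ((q + 1 + 1) * K + 1), ∑ ψ' ∈ Ψ k₂,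
            eqW (genNet K Ψ) (q * K + ψ) m * eqW (genNet K Ψ) (q * K + ψ') m :=
          Finset.sum_comm
      _ = ∑ ψ ∈ Ψ k₁, ∑ ψ' ∈ Ψ k₂, ∑ m ∈ Finset.range ((q + 1 + 1) * K + 1),
            eqW (genNet K Ψ) (q * K + ψ) m * eqW (genNet K Ψ) (q * K + ψ') m :=
          Finset.sum_congr rfl (fun ψ _ => Finset.sum_comm)
      _ = ∑ ψ ∈ Ψ k₁, ∑ ψ' ∈ Ψ k₂, (if ψ = ψ' then V else C) :=
          Finset.sum_congr rfl (fun ψ hψ => Finset.sum_congr rfl (fun ψ' hψ' =>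
            h.inner (hsub k₁ hk₁ hψ) (hsub k₂ hk₂ hψ') (by omega)))
      _ = ∑ ψ ∈ Ψ k₁, ((d : ℝ) * C + (if ψ ∈ Ψ k₂ then V - C else 0)) := by
          apply Finset.sum_congr rfl
          intro ψ _
          rw [Finset.sum_congr rfl (fun ψ' _ =>
            (by split <;> ring : (if ψ = ψ' then V else C) = C + (if ψ = ψ' then V - C else 0))),
            Finset.sum_add_distrib, Finset.sum_const, Finset.sum_ite_eq, hcard k₂ hk₂,
            nsmul_eq_mul]
      _ = (d : ℝ) * ((d : ℝ) * C) + ((Ψ k₁ ∩ Ψ k₂).card : ℝ) * (V - C) := by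
          rw [Finset.sum_add_distrib, Finset.sum_const, Finset.sum_ite_mem,
            Finset.sum_const, hcard k₁ hk₁, nsmul_eq_mul, nsmul_eq_mul]
  rw [S1, S2, S3, S4]
  ring
lemma step_main {K d c : ℕ} {Ψ : ℕ → Finset ℕ} {q : ℕ} {V C r : ℝ}
    (hK : 2 ≤ K) (hd : 2 ≤ d)
    (hsub : ∀ k ∈ Finset.Icc 1 K, Ψ k ⊆ Finset.Icc 1 K)
    (hcard : ∀ k ∈ Finset.Icc 1 K, (Ψ k).card = d)
    (hinter : ∀ k₁ ∈ Finset.Icc 1 K, ∀ k₂ ∈ Finset.Icc 1 K, k₁ ≠ k₂ →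
      ((Ψ k₁) ∩ (Ψ k₂)).card = c)
    (h : GInv K Ψ q V C r) (h1 : 1 ≤ V - C) (h2 : 0 ≤ C) :
    ∃ V' C' r', GInv K Ψ (q + 1) V' C' r' ∧ 1 ≤ V' - C' ∧ 0 ≤ C' := by
  set B := Bval d V C r with hB
  refine ⟨1 + B ^ 2 * ((d : ℝ) * (V - C) + (d : ℝ) ^ 2 * C),
    B ^ 2 * ((c : ℝ) * (V - C) + (d : ℝ) ^ 2 * C), 1 + B * (d : ℝ) * r, ⟨?_, ?_, ?_, ?_⟩, ?_, ?_⟩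
  · -- support
    intro k hk m hm
    by_cases hmi : m = (q + 1) * K + k
    · exact Or.inr hmi
    · left
      by_contra hcon
      push_neg at hcon
      apply hm
      rw [step_rec hd hsub hcard h h1 h2 k hk m, if_neg hmi]
      have : ∑ ψ ∈ Ψ k, eqW (genNet K Ψ) (q * K + ψ) m = 0 := by
        apply Finset.sum_eq_zero
        intro ψ hψ
        apply h.Whigh (hsub k hk hψ)
        by_cases hm0 : m = 0
        · exact Or.inl hm0
        · exact Or.inr (by omega)
      rw [this, mul_zero, add_zero]
  · -- variance
    intro k hk
    rw [step_key hd hsub hcard h h1 h2 k hk k hk, if_pos rfl, Finset.inter_self,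
      hcard k hk]
  · -- covariance
    intro k₁ hk₁ k₂ hk₂ hne
    rw [step_key hd hsub hcard h h1 h2 k₁ hk₁ k₂ hk₂, if_neg hne,
      hinter k₁ hk₁ k₂ hk₂ hne, zero_add]
  · -- row sum
    intro k hk
    have hrec := step_rec hd hsub hcard h h1 h2 k hk
    rw [Finset.sum_congr rfl (fun m _ => hrec m), Finset.sum_add_distrib,
      ← Finset.mul_sum]
    have e1 : ∑ m ∈ Finset.range ((q + 1 + 1) * K + 1),
        (if m = (q + 1) * K + k then (1:ℝ) else 0) = 1 := by
      rw [Finset.sum_ite_eq' (Finset.range ((q + 1 + 1) * K + 1)) ((q + 1) * K + k)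
        (fun _ => (1:ℝ))]
      rw [if_pos (Finset.mem_range.mpr (by
        obtain ⟨hk1, hk2⟩ := Finset.mem_Icc.mp hk
        have : (q + 1 + 1) * K = (q + 1) * K + K := by ring
        omega))]
    have e2 : ∑ m ∈ Finset.range ((q + 1 + 1) * K + 1),
        ∑ ψ ∈ Ψ k, eqW (genNet K Ψ) (q * K + ψ) m = (d : ℝ) * r := by
      rw [Finset.sum_comm]
      rw [Finset.sum_congr rfl (fun ψ hψ => h.rsum (hsub k hk hψ) (by
        have : (q + 1 + 1) * K = (q + 1) * K + K := by ring
        omega))]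
      rw [Finset.sum_const, hcard k hk, nsmul_eq_mul]
    rw [e1, e2, hB, Bval]
    ring
  · -- 1 ≤ V' - C'
    have hcd : c ≤ d := by
      have h12 : (1 : ℕ) ∈ Finset.Icc 1 K := Finset.mem_Icc.mpr ⟨le_refl 1, by omega⟩
      have h22 : (2 : ℕ) ∈ Finset.Icc 1 K := Finset.mem_Icc.mpr ⟨by omega, hK⟩
      rw [← hinter 1 h12 2 h22 (by omega), ← hcard 1 h12]
      exact Finset.card_le_card (Finset.inter_subset_left)
    have hcdR : (c : ℝ) ≤ (d : ℝ) := by exact_mod_cast hcd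
    have hB2 : (0 : ℝ) ≤ B ^ 2 := sq_nonneg B
    nlinarith [mul_nonneg hB2 (mul_nonneg (by linarith : (0:ℝ) ≤ (d:ℝ) - c) (by linarith : (0:ℝ) ≤ V - C))]
  · -- 0 ≤ C'
    have hB2 : (0 : ℝ) ≤ B ^ 2 := sq_nonneg B
    have : (0:ℝ) ≤ (c : ℝ) * (V - C) + (d : ℝ) ^ 2 * C := by positivity
    positivity
lemma base_main {K : ℕ} {Ψ : ℕ → Finset ℕ} (hK : 2 ≤ K) :
    GInv K Ψ 0 1 0 1 := by
  have hW : ∀ ψ ∈ Finset.Icc 1 K, ∀ m, eqW (genNet K Ψ) (0 * K + ψ) m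
      = if m = 0 * K + ψ then 1 else 0 := by
    intro ψ hψ m
    obtain ⟨h1, h2⟩ := Finset.mem_Icc.mp hψ
    exact eqW_empty _ _ (nbr_base K Ψ _ (by omega)) m
  refine ⟨?_, ?_, ?_, ?_⟩
  · intro ψ hψ m hm
    rw [hW ψ hψ m] at hm
    right
    by_contra hc
    rw [if_neg hc] at hm
    exact hm rfl
  · intro ψ hψ
    obtain ⟨h1, h2⟩ := Finset.mem_Icc.mp hψ
    rw [Finset.sum_congr rfl (fun m _ => by rw [hW ψ hψ m])]
    rw [Finset.sum_congr rfl (fun m _ =>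
      (by split <;> simp : (if m = 0 * K + ψ then (1:ℝ) else 0) * (if m = 0 * K + ψ then 1 else 0)
        = if m = 0 * K + ψ then 1 else 0))]
    rw [Finset.sum_ite_eq' (Finset.range ((0 + 1) * K + 1)) (0 * K + ψ) (fun _ => (1:ℝ))]
    rw [if_pos (Finset.mem_range.mpr (by omega))]
  · intro ψ₁ hψ₁ ψ₂ hψ₂ hne
    rw [Finset.sum_congr rfl (fun m _ => by rw [hW ψ₁ hψ₁ m, hW ψ₂ hψ₂ m])]
    apply Finset.sum_eq_zero
    intro m _
    by_cases hm : m = 0 * K + ψ₁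
    · rw [if_neg (by omega : ¬ m = 0 * K + ψ₂), mul_zero]
    · rw [if_neg hm, zero_mul]
  · intro ψ hψ
    obtain ⟨h1, h2⟩ := Finset.mem_Icc.mp hψ
    rw [Finset.sum_congr rfl (fun m _ => by rw [hW ψ hψ m])]
    rw [Finset.sum_ite_eq' (Finset.range ((0 + 1) * K + 1)) (0 * K + ψ) (fun _ => (1:ℝ))]
    rw [if_pos (Finset.mem_range.mpr (by omega))]

lemma main_ind {K d c : ℕ} {Ψ : ℕ → Finset ℕ}
    (hK : 2 ≤ K) (hd : 2 ≤ d)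
    (hsub : ∀ k ∈ Finset.Icc 1 K, Ψ k ⊆ Finset.Icc 1 K)
    (hcard : ∀ k ∈ Finset.Icc 1 K, (Ψ k).card = d)
    (hinter : ∀ k₁ ∈ Finset.Icc 1 K, ∀ k₂ ∈ Finset.Icc 1 K, k₁ ≠ k₂ →
      ((Ψ k₁) ∩ (Ψ k₂)).card = c) :
    ∀ q : ℕ, ∃ V C r : ℝ, GInv K Ψ q V C r ∧ 1 ≤ V - C ∧ 0 ≤ C := by
  intro q
  induction q with
  | zero => exact ⟨1, 0, 1, base_main hK, by norm_num, le_refl 0⟩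
  | succ q ih =>
    obtain ⟨V, C, r, h, h1, h2⟩ := ih
    obtain ⟨V', C', r', h', h1', h2'⟩ := step_main hK hd hsub hcard hinter h h1 h2
    exact ⟨V', C', r', h', h1', h2'⟩

/-- In a generations network with generation size `K ≥ 2`
associated to symmetric observation sets with parameters `(d, c)`, `d ≥ 2`:
(i) `Σ_j W_i(j)²` (the conditional variance, up to `4/σ²`) is the same for all
agents `i` in generation `t`; (ii) `Σ_j W_i(j)W_{i′}(j)` (the conditional
covariance) is the same for all pairs of distinct agents of generation `t`; and
(iii) for `t ≥ 2` all components of `β_i` are equal, with common value depending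
only on `t`. -/
theorem symmetric_generations_symmetry (K d c : ℕ) (hK : 2 ≤ K) (hd : 2 ≤ d)
    (Ψ : ℕ → Finset ℕ)
    (hsub : ∀ k ∈ Finset.Icc 1 K, Ψ k ⊆ Finset.Icc 1 K)
    (hcard : ∀ k ∈ Finset.Icc 1 K, (Ψ k).card = d)
    (hinter : ∀ k₁ ∈ Finset.Icc 1 K, ∀ k₂ ∈ Finset.Icc 1 K, k₁ ≠ k₂ →
      ((Ψ k₁) ∩ (Ψ k₂)).card = c) :
    (∀ t : ℕ, 1 ≤ t → ∀ k ∈ Finset.Icc 1 K, ∀ k' ∈ Finset.Icc 1 K,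
      (∑ j ∈ Finset.range (t * K + 1), (eqW (genNet K Ψ) ((t - 1) * K + k) j) ^ 2)
        = ∑ j ∈ Finset.range (t * K + 1), (eqW (genNet K Ψ) ((t - 1) * K + k') j) ^ 2) ∧
    (∀ t : ℕ, 1 ≤ t → ∀ k₁ ∈ Finset.Icc 1 K, ∀ k₂ ∈ Finset.Icc 1 K,
      ∀ k₁' ∈ Finset.Icc 1 K, ∀ k₂' ∈ Finset.Icc 1 K, k₁ ≠ k₂ → k₁' ≠ k₂' →
      (∑ j ∈ Finset.range (t * K + 1),
          eqW (genNet K Ψ) ((t - 1) * K + k₁) j * eqW (genNet K Ψ) ((t - 1) * K + k₂) j)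
        = ∑ j ∈ Finset.range (t * K + 1),
            eqW (genNet K Ψ) ((t - 1) * K + k₁') j
              * eqW (genNet K Ψ) ((t - 1) * K + k₂') j) ∧
    (∀ t : ℕ, 2 ≤ t → ∀ k ∈ Finset.Icc 1 K, ∀ k' ∈ Finset.Icc 1 K,
      ∀ j (hj : j ∈ nbr (genNet K Ψ) ((t - 1) * K + k))
        (j' : ℕ) (hj' : j' ∈ nbr (genNet K Ψ) ((t - 1) * K + k')),
      eqBeta (genNet K Ψ) ((t - 1) * K + k) ⟨j, hj⟩
        = eqBeta (genNet K Ψ) ((t - 1) * K + k') ⟨j', hj'⟩) := by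
  refine ⟨?_, ?_, ?_⟩
  · intro t ht k hk k' hk'
    obtain ⟨p, rfl⟩ : ∃ p, t = p + 1 := ⟨t - 1, by omega⟩
    obtain ⟨V, C, r, h, h1, h2⟩ := main_ind hK hd hsub hcard hinter p
    show (∑ j ∈ Finset.range ((p + 1) * K + 1), (eqW (genNet K Ψ) (p * K + k) j) ^ 2)
      = ∑ j ∈ Finset.range ((p + 1) * K + 1), (eqW (genNet K Ψ) (p * K + k') j) ^ 2
    have conv : ∀ k'' ∈ Finset.Icc 1 K,
        (∑ j ∈ Finset.range ((p + 1) * K + 1), (eqW (genNet K Ψ) (p * K + k'') j) ^ 2) = V := by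
      intro k'' hk''
      rw [Finset.sum_congr rfl (fun j _ => pow_two (eqW (genNet K Ψ) (p * K + k'') j))]
      exact h.2.1 k'' hk''
    rw [conv k hk, conv k' hk']
  · intro t ht k₁ hk₁ k₂ hk₂ k₁' hk₁' k₂' hk₂' hne hne'
    obtain ⟨p, rfl⟩ : ∃ p, t = p + 1 := ⟨t - 1, by omega⟩
    obtain ⟨V, C, r, h, h1, h2⟩ := main_ind hK hd hsub hcard hinter p
    show (∑ j ∈ Finset.range ((p + 1) * K + 1),
        eqW (genNet K Ψ) (p * K + k₁) j * eqW (genNet K Ψ) (p * K + k₂) j)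
      = ∑ j ∈ Finset.range ((p + 1) * K + 1),
        eqW (genNet K Ψ) (p * K + k₁') j * eqW (genNet K Ψ) (p * K + k₂') j
    rw [h.2.2.1 k₁ hk₁ k₂ hk₂ hne, h.2.2.1 k₁' hk₁' k₂' hk₂' hne']
  · intro t ht k hk k' hk' j hj j' hj'
    obtain ⟨q, rfl⟩ : ∃ q, t = q + 2 := ⟨t - 2, by omega⟩
    obtain ⟨V, C, r, h, h1, h2⟩ := main_ind hK hd hsub hcard hinter q
    have hb := step_beta hd hsub hcard h h1 h2
    exact (hb k hk ⟨j, hj⟩).trans (hb k' hk' ⟨j', hj'⟩).symm
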